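/- Let n ≥ 1 and let ‖·‖₁ and ‖·‖₂ be norms on ℂⁿ. The generalized induced norm ‖A‖_{1,2} = max{‖Ax‖₂ : ‖x‖₁ = 1} is an algebra norm on M_n (i.e., ‖AB‖_{1,2} ≤ ‖A‖_{1,2}‖B‖_{1,2} for all A, B ∈ M_n) if and only if ‖x‖₁ ≤ ‖x‖₂ for all x ∈ ℂⁿ. -/

import Mathlib

open Matrix

/-- `ν` is a norm on `ℂⁿ`. -/
def IsNormCn {n : ℕ} (ν : (Fin n → ℂ) → ℝ) : Prop :=
  (∀ x, ν x = 0 ↔ x = 0) ∧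
  (∀ (c : ℂ) (x), ν (c • x) = ‖c‖ * ν x) ∧
  (∀ x y, ν (x + y) ≤ ν x + ν y)

/-- `N` is a norm on the n×n complex matrices. -/
def IsNormMn {n : ℕ} (N : Matrix (Fin n) (Fin n) ℂ → ℝ) : Prop :=
  (∀ A, N A = 0 ↔ A = 0) ∧
  (∀ (c : ℂ) (A), N (c • A) = ‖c‖ * N A) ∧
  (∀ A B, N (A + B) ≤ N A + N B)

/-- `N` is a minimal norm on `M_n`: any norm dominated by `N` equals `N`. -/
def IsMinimalNorm {n : ℕ} (N : Matrix (Fin n) (Fin n) ℂ → ℝ) : Prop :=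
  ∀ N' : Matrix (Fin n) (Fin n) ℂ → ℝ,
    IsNormMn N' → (∀ A, N' A ≤ N A) → ∀ A, N' A = N A

/-- The generalized induced norm `‖A‖_{1,2} = max{‖Ax‖₂ : ‖x‖₁ = 1}`. -/
noncomputable def gind {n : ℕ} (ν₁ ν₂ : (Fin n → ℂ) → ℝ)
    (A : Matrix (Fin n) (Fin n) ℂ) : ℝ :=
  sSup {r : ℝ | ∃ x : Fin n → ℂ, ν₁ x = 1 ∧ r = ν₂ (A.mulVec x)}

/-- `C_x`: the matrix all of whose columns equal `x`, i.e. `y ↦ (∑ j, y j) • x`. -/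
def Cmat {n : ℕ} (x : Fin n → ℂ) : Matrix (Fin n) (Fin n) ℂ :=
  Matrix.of fun i _ => x i

lemma IsNormCn.nonneg {n : ℕ} {ν : (Fin n → ℂ) → ℝ} (h : IsNormCn ν) (x : Fin n → ℂ) :
    0 ≤ ν x := by
  have h0 : ν 0 = 0 := (h.1 0).mpr rfl
  have hneg : ν (-x) = ν x := by
    have := h.2.1 (-1) x
    simpa using this
  have ht := h.2.2 x (-x)
  rw [add_neg_cancel, h0, hneg] at ht
  linarith

lemma IsNormCn.pos {n : ℕ} {ν : (Fin n → ℂ) → ℝ} (h : IsNormCn ν) {x : Fin n → ℂ}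
    (hx : x ≠ 0) : 0 < ν x :=
  lt_of_le_of_ne (h.nonneg x) (fun e => hx ((h.1 x).mp e.symm))

def NVec (n : ℕ) (ν : (Fin n → ℂ) → ℝ) : Type := Fin n → ℂ

noncomputable def NVec.nacg {n : ℕ} {ν : (Fin n → ℂ) → ℝ} (h : IsNormCn ν) :
    NormedAddCommGroup (NVec n ν) := by
  letI : AddCommGroup (NVec n ν) := inferInstanceAs (AddCommGroup (Fin n → ℂ))
  exact AddGroupNorm.toNormedAddCommGroup
    { toFun := ν
      map_zero' := (h.1 0).mpr rfl
      add_le' := h.2.2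
      neg' := fun x => by
        have key : ∀ z : Fin n → ℂ, ν (-z) = ν z := fun z => by simpa using h.2.1 (-1) z
        exact key x
      eq_zero_of_map_eq_zero' := fun x hx => (h.1 x).mp hx }

noncomputable def NVec.ns {n : ℕ} {ν : (Fin n → ℂ) → ℝ} (h : IsNormCn ν) :
    @NormedSpace ℂ (NVec n ν) _ (NVec.nacg h).toSeminormedAddCommGroup :=
  @NormedSpace.mk ℂ (NVec n ν) _ (NVec.nacg h).toSeminormedAddCommGroup
    (inferInstanceAs (Module ℂ (Fin n → ℂ)))
    (fun c x => by exact le_of_eq (h.2.1 c x))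

lemma exists_opBound {n : ℕ} {ν₁ ν₂ : (Fin n → ℂ) → ℝ} (h₁ : IsNormCn ν₁) (h₂ : IsNormCn ν₂)
    (f : (Fin n → ℂ) →ₗ[ℂ] (Fin n → ℂ)) :
    ∃ C : ℝ, ∀ x, ν₂ (f x) ≤ C * ν₁ x := by
  letI i1 := NVec.nacg (n := n) h₁
  letI i2 := NVec.nacg (n := n) h₂
  letI := NVec.ns h₁
  letI := NVec.ns h₂
  letI : FiniteDimensional ℂ (NVec n ν₁) :=
    inferInstanceAs (FiniteDimensional ℂ (Fin n → ℂ))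
  let f' : NVec n ν₁ →ₗ[ℂ] NVec n ν₂ := f
  have hc : Continuous f' := f'.continuous_of_finiteDimensional
  let g : NVec n ν₁ →L[ℂ] NVec n ν₂ := ⟨f', hc⟩
  exact ⟨‖g‖, fun x => by exact g.le_opNorm x⟩

lemma exists_norming {n : ℕ} {ν : (Fin n → ℂ) → ℝ} (h : IsNormCn ν) (y : Fin n → ℂ)
    (hy : y ≠ 0) :
    ∃ φ : (Fin n → ℂ) →ₗ[ℂ] ℂ, (∀ u, ‖φ u‖ ≤ ν u) ∧ φ y = (ν y : ℂ) := by
  obtain ⟨g, hg1, hgy⟩ := @exists_dual_vector ℂ _ (NVec n ν) (NVec.nacg h).toSeminormedAddCommGroup (NVec.ns h)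
    (y : NVec n ν) (h.pos hy).ne'
  letI := NVec.nacg (n := n) h
  letI := NVec.ns h
  have hny : @norm (NVec n ν) (NVec.nacg h).toNorm (y : NVec n ν) = ν y := rfl
  rw [hny] at hgy
  refine ⟨g.toLinearMap, fun u => ?_, ?_⟩
  · have := g.le_opNorm (u : NVec n ν)
    rw [hg1, one_mul] at this
    have hnu : @norm (NVec n ν) (NVec.nacg h).toNorm (u : NVec n ν) = ν u := rfl
    rw [hnu] at this
    exact this
  · exact_mod_cast hgy

open Matrix

section gind

variable {n : ℕ} {ν₁ ν₂ : (Fin n → ℂ) → ℝ}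

lemma gind_bddAbove (h₁ : IsNormCn ν₁) (h₂ : IsNormCn ν₂) (A : Matrix (Fin n) (Fin n) ℂ) :
    BddAbove {r : ℝ | ∃ x : Fin n → ℂ, ν₁ x = 1 ∧ r = ν₂ (A.mulVec x)} := by
  obtain ⟨C, hC⟩ := exists_opBound h₁ h₂ A.mulVecLin
  refine ⟨C, fun r hr => ?_⟩
  obtain ⟨x, hx, rfl⟩ := hr
  have := hC x
  rw [Matrix.mulVecLin_apply] at this
  simpa [hx] using this

lemma exists_unit (hn : 1 ≤ n) (h₁ : IsNormCn ν₁) : ∃ x : Fin n → ℂ, ν₁ x = 1 := by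
  have i0 : Fin n := ⟨0, hn⟩
  set e : Fin n → ℂ := Pi.single i0 1 with he
  have hne : e ≠ 0 := by
    intro hcon
    have := congrFun hcon i0
    simp [he] at this
  have hpos : 0 < ν₁ e := h₁.pos hne
  refine ⟨((ν₁ e)⁻¹ : ℝ) • e, ?_⟩
  have : (((ν₁ e)⁻¹ : ℝ) : ℂ) • e = ((ν₁ e)⁻¹ : ℝ) • e := by
    funext k; simp [Complex.real_smul]
  rw [← this, h₁.2.1]
  rw [Complex.norm_real, Real.norm_eq_abs, abs_of_pos (by positivity)]
  field_simp

lemma gind_nonempty (hn : 1 ≤ n) (h₁ : IsNormCn ν₁) (A : Matrix (Fin n) (Fin n) ℂ) :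
    {r : ℝ | ∃ x : Fin n → ℂ, ν₁ x = 1 ∧ r = ν₂ (A.mulVec x)}.Nonempty := by
  obtain ⟨x, hx⟩ := exists_unit hn h₁
  exact ⟨ν₂ (A.mulVec x), x, hx, rfl⟩

lemma le_gind (h₁ : IsNormCn ν₁) (h₂ : IsNormCn ν₂) (A : Matrix (Fin n) (Fin n) ℂ)
    {x : Fin n → ℂ} (hx : ν₁ x = 1) : ν₂ (A.mulVec x) ≤ gind ν₁ ν₂ A :=
  le_csSup (gind_bddAbove h₁ h₂ A) ⟨x, hx, rfl⟩

lemma gind_le (hn : 1 ≤ n) (h₁ : IsNormCn ν₁) (A : Matrix (Fin n) (Fin n) ℂ) {C : ℝ}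
    (hC : ∀ x : Fin n → ℂ, ν₁ x = 1 → ν₂ (A.mulVec x) ≤ C) : gind ν₁ ν₂ A ≤ C := by
  refine csSup_le (gind_nonempty hn h₁ A) ?_
  rintro r ⟨x, hx, rfl⟩
  exact hC x hx

lemma gind_nonneg (hn : 1 ≤ n) (h₁ : IsNormCn ν₁) (h₂ : IsNormCn ν₂)
    (A : Matrix (Fin n) (Fin n) ℂ) : 0 ≤ gind ν₁ ν₂ A := by
  obtain ⟨x, hx⟩ := exists_unit hn h₁
  exact le_trans (h₂.nonneg _) (le_gind h₁ h₂ A hx)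

lemma gind_mulVec (hn : 1 ≤ n) (h₁ : IsNormCn ν₁) (h₂ : IsNormCn ν₂)
    (A : Matrix (Fin n) (Fin n) ℂ) (x : Fin n → ℂ) :
    ν₂ (A.mulVec x) ≤ gind ν₁ ν₂ A * ν₁ x := by
  by_cases hx : x = 0
  · subst hx
    simp [Matrix.mulVec_zero, (h₂.1 0).mpr rfl, (h₁.1 0).mpr rfl]
  · have hpos : 0 < ν₁ x := h₁.pos hx
    set c : ℂ := (((ν₁ x)⁻¹ : ℝ) : ℂ) with hc
    have hc1 : ν₁ (c • x) = 1 := by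
      rw [h₁.2.1, hc, Complex.norm_real, Real.norm_eq_abs, abs_of_pos (by positivity)]
      field_simp
    have h1 := le_gind h₁ h₂ A hc1
    rw [Matrix.mulVec_smul, h₂.2.1, hc, Complex.norm_real, Real.norm_eq_abs,
      abs_of_pos (by positivity)] at h1
    calc ν₂ (A.mulVec x) = ((ν₁ x)⁻¹ * ν₂ (A.mulVec x)) * ν₁ x := by field_simp
    _ ≤ gind ν₁ ν₂ A * ν₁ x := by
        apply mul_le_mul_of_nonneg_right h1 (le_of_lt hpos)

end gind

lemma unit_scale {n : ℕ} {ν : (Fin n → ℂ) → ℝ} (h : IsNormCn ν) {x : Fin n → ℂ}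
    (hx : x ≠ 0) : ν (((( ν x)⁻¹ : ℝ) : ℂ) • x) = 1 := by
  have hpos : 0 < ν x := h.pos hx
  rw [h.2.1, Complex.norm_real, Real.norm_eq_abs, abs_of_pos (by positivity)]
  field_simp

theorem gind_algebra_norm_iff (n : ℕ) (hn : 1 ≤ n)
    (ν₁ ν₂ : (Fin n → ℂ) → ℝ) (h₁ : IsNormCn ν₁) (h₂ : IsNormCn ν₂) :
    (∀ A B : Matrix (Fin n) (Fin n) ℂ,
        gind ν₁ ν₂ (A * B) ≤ gind ν₁ ν₂ A * gind ν₁ ν₂ B) ↔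
      ∀ x : Fin n → ℂ, ν₁ x ≤ ν₂ x := by
  constructor
  · intro hsub y
    by_cases hy : y = 0
    · subst hy
      rw [(h₁.1 0).mpr rfl]
      exact h₂.nonneg 0
    · obtain ⟨φ, hφle, hφy⟩ := exists_norming h₁ y hy
      have hν1 : 0 < ν₁ y := h₁.pos hy
      have hν2 : 0 < ν₂ y := h₂.pos hy
      set M : Matrix (Fin n) (Fin n) ℂ := Matrix.of fun i j => φ (Pi.single j 1) * y i with hMdef
      have hMvec : ∀ u, M.mulVec u = φ u • y := by
        intro u
        have hu : φ u = ∑ j, u j * φ (Pi.single j 1) := by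
          conv_lhs => rw [← Finset.univ_sum_single u]
          rw [map_sum]
          refine Finset.sum_congr rfl fun j _ => ?_
          have hsingle : Pi.single j (u j) = u j • (Pi.single j 1 : Fin n → ℂ) := by
            funext k
            by_cases hk : k = j <;> simp [Pi.single_apply, hk]
          rw [hsingle, φ.map_smul, smul_eq_mul]
        funext i
        simp only [Matrix.mulVec, dotProduct, hMdef, Matrix.of_apply, Pi.smul_apply,
          smul_eq_mul]
        rw [hu, Finset.sum_mul]
        exact Finset.sum_congr rfl fun j _ => by ring
      have hgM : gind ν₁ ν₂ M ≤ ν₂ y := by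
        apply gind_le hn h₁
        intro x hx
        rw [hMvec, h₂.2.1]
        calc ‖φ x‖ * ν₂ y ≤ 1 * ν₂ y := by
              apply mul_le_mul_of_nonneg_right _ hν2.le
              rw [← hx]; exact hφle x
        _ = ν₂ y := one_mul _
      set u₀ : Fin n → ℂ := (((ν₁ y)⁻¹ : ℝ) : ℂ) • y with hu₀def
      have hu₀ : ν₁ u₀ = 1 := unit_scale h₁ hy
      have hφu₀ : φ u₀ = 1 := by
        rw [hu₀def, φ.map_smul, smul_eq_mul, hφy]
        rw [← Complex.ofReal_mul, inv_mul_cancel₀ hν1.ne', Complex.ofReal_one]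
      have hMMu₀ : (M * M).mulVec u₀ = ((ν₁ y : ℝ) : ℂ) • y := by
        rw [← Matrix.mulVec_mulVec, hMvec u₀, hφu₀, one_smul, hMvec y, hφy]
      have key : ν₁ y * ν₂ y ≤ gind ν₁ ν₂ (M * M) := by
        have h3 := le_gind h₁ h₂ (M * M) hu₀
        rw [hMMu₀, h₂.2.1, Complex.norm_real, Real.norm_eq_abs, abs_of_pos hν1] at h3
        exact h3
      have chain : ν₁ y * ν₂ y ≤ ν₂ y * ν₂ y := by
        calc ν₁ y * ν₂ y ≤ gind ν₁ ν₂ (M * M) := key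
        _ ≤ gind ν₁ ν₂ M * gind ν₁ ν₂ M := hsub M M
        _ ≤ ν₂ y * ν₂ y := by
            apply mul_le_mul hgM hgM (gind_nonneg hn h₁ h₂ M) hν2.le
      exact le_of_mul_le_mul_right chain hν2
  · intro hle A B
    apply gind_le hn h₁
    intro x hx
    rw [← Matrix.mulVec_mulVec]
    calc ν₂ (A.mulVec (B.mulVec x)) ≤ gind ν₁ ν₂ A * ν₁ (B.mulVec x) :=
          gind_mulVec hn h₁ h₂ A _
    _ ≤ gind ν₁ ν₂ A * ν₂ (B.mulVec x) :=
          mul_le_mul_of_nonneg_left (hle _) (gind_nonneg hn h₁ h₂ A)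
    _ ≤ gind ν₁ ν₂ A * gind ν₁ ν₂ B :=
          mul_le_mul_of_nonneg_left (le_gind h₁ h₂ B hx) (gind_nonneg hn h₁ h₂ A)
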